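/- For real κ with 0<κ<1, the function exp_κ(x) = (√(1+κ²x²) + κx)^{1/κ} is strictly convex on ℝ (its second derivative is positive everywhere). -/

import Mathlib

noncomputable def kexp (κ x : ℝ) : ℝ :=
  (Real.sqrt (1 + κ^2 * x^2) + κ*x) ^ (1/κ : ℝ)

section aux

variable {κ : ℝ}

lemma sq_pos_aux (κ x : ℝ) : 0 < 1 + κ^2 * x^2 := by positivity

lemma s_pos (κ x : ℝ) : 0 < Real.sqrt (1 + κ^2 * x^2) :=
  Real.sqrt_pos.mpr (sq_pos_aux κ x)

lemma s_sq (κ x : ℝ) : (Real.sqrt (1 + κ^2 * x^2))^2 = 1 + κ^2 * x^2 :=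
  Real.sq_sqrt (sq_pos_aux κ x).le

lemma u_pos (h0 : 0 < κ) (x : ℝ) : 0 < Real.sqrt (1 + κ^2 * x^2) + κ*x := by
  have hs := s_pos κ x
  have hsq := s_sq κ x
  nlinarith [sq_nonneg (Real.sqrt (1 + κ^2 * x^2) + κ*x)]

lemma s_hasDerivAt (κ x : ℝ) :
    HasDerivAt (fun x => Real.sqrt (1 + κ^2 * x^2))
      (κ^2 * x / Real.sqrt (1 + κ^2 * x^2)) x := by
  have h : HasDerivAt (fun x : ℝ => 1 + κ^2 * x^2) (κ^2 * (2*x)) x := by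
    simpa using ((hasDerivAt_pow 2 x).const_mul (κ^2)).const_add 1
  have := h.sqrt (ne_of_gt (sq_pos_aux κ x))
  convert this using 1
  have hs := (s_pos κ x).ne'
  field_simp

lemma kexp_hasDerivAt (h0 : 0 < κ) (x : ℝ) :
    HasDerivAt (kexp κ)
      ((Real.sqrt (1 + κ^2 * x^2) + κ*x) ^ (1/κ : ℝ) / Real.sqrt (1 + κ^2 * x^2)) x := by
  set s := Real.sqrt (1 + κ^2 * x^2) with hsdef
  have hs := s_pos κ x
  have hu := u_pos h0 x
  have hder : HasDerivAt (fun x => Real.sqrt (1 + κ^2 * x^2) + κ*x)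
      (κ^2 * x / s + κ) x := by
    have h := (s_hasDerivAt κ x).add ((hasDerivAt_id x).const_mul κ)
    rw [mul_one] at h
    exact h
  have H := hder.rpow_const (p := (1/κ : ℝ)) (Or.inl hu.ne')
  convert H using 1
  · rfl
  have hupow : (s + κ*x) ^ ((1/κ : ℝ) - 1) = (s + κ*x) ^ (1/κ : ℝ) / (s + κ*x) := by
    rw [Real.rpow_sub hu, Real.rpow_one]
  rw [hupow]
  have hu' : s + κ*x ≠ 0 := hu.ne'
  have hs' : s ≠ 0 := hs.ne'
  field_simp
  ring

lemma deriv_kexp (h0 : 0 < κ) :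
    deriv (kexp κ) = fun x =>
      (Real.sqrt (1 + κ^2 * x^2) + κ*x) ^ (1/κ : ℝ) / Real.sqrt (1 + κ^2 * x^2) := by
  funext x
  exact (kexp_hasDerivAt h0 x).deriv

lemma kexp_hasDerivAt2 (h0 : 0 < κ) (x : ℝ) :
    HasDerivAt (fun x =>
      (Real.sqrt (1 + κ^2 * x^2) + κ*x) ^ (1/κ : ℝ) / Real.sqrt (1 + κ^2 * x^2))
      ((Real.sqrt (1 + κ^2 * x^2) + κ*x) ^ (1/κ : ℝ) *
        (Real.sqrt (1 + κ^2 * x^2) - κ^2 * x) / (Real.sqrt (1 + κ^2 * x^2))^3) x := by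
  set s := Real.sqrt (1 + κ^2 * x^2) with hsdef
  have hs := s_pos κ x
  have hN : HasDerivAt (fun x => (Real.sqrt (1 + κ^2 * x^2) + κ*x) ^ (1/κ : ℝ))
      ((s + κ*x) ^ (1/κ : ℝ) / s) x := kexp_hasDerivAt h0 x
  have H := hN.div (s_hasDerivAt κ x) hs.ne'
  convert H using 1
  · rfl
  · rfl
  · rfl
  have hsq := s_sq κ x
  rw [← hsdef] at hsq
  simp only [one_div]
  have hs' : s ≠ 0 := hs.ne'
  field_simp
  ring

lemma deriv2_pos (h0 : 0 < κ) (h1 : κ < 1) (x : ℝ) :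
    0 < deriv (deriv (kexp κ)) x := by
  rw [deriv_kexp h0, (kexp_hasDerivAt2 h0 x).deriv]
  have hs := s_pos κ x
  have hsq := s_sq κ x
  have hu := u_pos h0 x
  have hnum : 0 < Real.sqrt (1 + κ^2 * x^2) - κ^2 * x := by
    rcases le_or_gt x 0 with hx | hx
    · nlinarith
    · have h2 : κ * x < Real.sqrt (1 + κ^2 * x^2) := by
        nlinarith [mul_pos h0 hx]
      nlinarith [mul_pos h0 hx]
  positivity

end aux

theorem kexp_strictConvex (κ : ℝ) (h0 : 0 < κ) (h1 : κ < 1) :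
    StrictConvexOn ℝ Set.univ (kexp κ) ∧
    ∀ x : ℝ, 0 < deriv (deriv (kexp κ)) x := by
  refine ⟨?_, deriv2_pos h0 h1⟩
  apply strictConvexOn_of_deriv2_pos convex_univ
  · exact fun x _ => (kexp_hasDerivAt h0 x).continuousAt.continuousWithinAt
  · intro x _
    simpa [Function.iterate_succ', Function.comp] using deriv2_pos h0 h1 x
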